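/- Let n ≥ 2 be an even integer and let φ : [−π/2, π/2] → ℝ be monotone and bounded. Then there exists ξ ∈ (−π/2, π/2) such that ∫_{−π/2}^{π/2} cos(n θ) · φ(θ) dθ = (sin(n ξ)/n) · (φ(−π/2) − φ(π/2)). -/

import Mathlib

open Real MeasureTheory intervalIntegral

lemma cosInt (c : ℝ) (hc : c ≠ 0) (a b : ℝ) :
    ∫ θ in a..b, Real.cos (c * θ) = (Real.sin (c * b) - Real.sin (c * a)) / c := by
  rw [intervalIntegral.integral_comp_mul_left (fun x => Real.cos x) hc]
  simp only [integral_cos, smul_eq_mul]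
  ring

lemma sinEvenHalf (n : ℕ) (hn : Even n) : Real.sin ((n : ℝ) * (π / 2)) = 0 := by
  obtain ⟨m, rfl⟩ := hn
  have : ((m + m : ℕ) : ℝ) * (π / 2) = (m : ℝ) * π := by push_cast; ring
  rw [this, Real.sin_nat_mul_pi]

lemma sinEvenHalf' (n : ℕ) (hn : Even n) : Real.sin ((n : ℝ) * (-(π / 2))) = 0 := by
  have : (n : ℝ) * (-(π / 2)) = -((n : ℝ) * (π / 2)) := by ring
  rw [this, Real.sin_neg, sinEvenHalf n hn, neg_zero]

lemma keyBound (n : ℕ) (hn2 : 2 ≤ n) (hn : Even n) (φ : ℝ → ℝ)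
    (hmono : MonotoneOn φ (Set.Icc (-(π / 2)) (π / 2))) :
    |∫ θ in (-(π / 2))..(π / 2), Real.cos (n * θ) * φ θ|
      ≤ (φ (π / 2) - φ (-(π / 2))) / n := by
  have hn0 : (n : ℝ) ≠ 0 := Nat.cast_ne_zero.mpr (by omega)
  have hnpos : (0 : ℝ) < n := by positivity
  set a : ℝ := -(π / 2) with ha
  set b : ℝ := π / 2 with hb
  have hab : a ≤ b := by rw [ha, hb]; have := Real.pi_pos; linarith
  set ψ : ℝ → ℝ := fun θ => φ (max a (min θ b)) - φ a with hψdef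
  have hclamp_mem : ∀ θ, max a (min θ b) ∈ Set.Icc a b := fun θ =>
    ⟨le_max_left _ _, max_le hab (min_le_right _ _)⟩
  have hψmono : Monotone ψ := by
    intro x y hxy
    exact sub_le_sub_right (hmono (hclamp_mem x) (hclamp_mem y)
      (max_le_max le_rfl (min_le_min hxy le_rfl))) _
  have hψnonneg : ∀ θ, 0 ≤ ψ θ := fun θ =>
    sub_nonneg.mpr (hmono (Set.left_mem_Icc.mpr hab) (hclamp_mem θ) (le_max_left _ _))
  have hψeq : ∀ θ ∈ Set.Icc a b, ψ θ = φ θ - φ a := by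
    intro θ hθ
    rw [hψdef]
    simp only [min_eq_left hθ.2, max_eq_right hθ.1]
  have hψb_top : ∀ θ, ψ θ ≤ ψ b := by
    intro θ
    refine sub_le_sub_right (hmono (hclamp_mem θ) (hclamp_mem b) ?_) _
    rw [min_self]
    exact max_le_max le_rfl (min_le_right _ _)
  have hψa : ψ a = 0 := by
    rw [hψeq a (Set.left_mem_Icc.mpr hab), sub_self]
  set A : Set (ℝ × ℝ) := {p | p.1 ∈ Set.Ioc a b ∧ p.2 ∈ Set.Ioo 0 (ψ p.1)} with hAdef
  have hAmeas : MeasurableSet A := by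
    have h1 : MeasurableSet {p : ℝ × ℝ | p.1 ∈ Set.Ioc a b} :=
      measurableSet_Ioc.preimage measurable_fst
    have h2 : MeasurableSet {p : ℝ × ℝ | 0 < p.2} :=
      measurableSet_Ioi.preimage measurable_snd
    have h3 : MeasurableSet {p : ℝ × ℝ | p.2 < ψ p.1} :=
      measurableSet_lt measurable_snd (hψmono.measurable.comp measurable_fst)
    have hA : A = {p : ℝ × ℝ | p.1 ∈ Set.Ioc a b} ∩ ({p | 0 < p.2} ∩ {p | p.2 < ψ p.1}) := by
      ext p
      simp only [hAdef, Set.mem_setOf_eq, Set.mem_inter_iff, Set.mem_Ioo, and_assoc]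
    rw [hA]
    exact h1.inter (h2.inter h3)
  set F : ℝ × ℝ → ℝ := A.indicator (fun p => Real.cos (n * p.1)) with hFdef
  have hAsub : A ⊆ Set.Ioc a b ×ˢ Set.Ioc 0 (ψ b) := by
    rintro ⟨θ, t⟩ ⟨h1, h2⟩
    exact ⟨h1, h2.1, h2.2.le.trans (hψb_top θ)⟩
  have hAfin : (volume.prod volume) A ≠ ⊤ := by
    refine ne_top_of_le_ne_top ?_ (measure_mono hAsub)
    rw [Measure.prod_prod]
    exact ENNReal.mul_ne_top measure_Ioc_lt_top.ne measure_Ioc_lt_top.ne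
  have hFint : Integrable F (volume.prod volume) := by
    rw [hFdef, integrable_indicator_iff hAmeas]
    refine Measure.integrableOn_of_bounded (M := 1) hAfin ?_ (ae_of_all _ fun p => ?_)
    · exact (Real.continuous_cos.comp (continuous_const.mul continuous_fst)).aestronglyMeasurable
    · rw [Real.norm_eq_abs]
      exact Real.abs_cos_le_one _
  have hswap := MeasureTheory.integral_integral_swap (f := fun θ t => F (θ, t)) hFint
  -- LHS
  have hinner : ∀ θ, (∫ t, F (θ, t)) =
      (Set.Ioc a b).indicator (fun θ => Real.cos (n * θ) * ψ θ) θ := by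
    intro θ
    by_cases hθ : θ ∈ Set.Ioc a b
    · have hfun : (fun t => F (θ, t)) = (Set.Ioo 0 (ψ θ)).indicator (fun _ => Real.cos (n * θ)) := by
        funext t
        by_cases ht : t ∈ Set.Ioo 0 (ψ θ)
        · rw [Set.indicator_of_mem ht, hFdef, Set.indicator_of_mem (show (θ, t) ∈ A from ⟨hθ, ht⟩)]
        · rw [Set.indicator_of_notMem ht, hFdef,
            Set.indicator_of_notMem (fun hmem => ht hmem.2)]
      rw [hfun, MeasureTheory.integral_indicator measurableSet_Ioo, setIntegral_const,
        Real.volume_real_Ioo_of_le (by linarith [hψnonneg θ])]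
      rw [Set.indicator_of_mem hθ]
      simp only [smul_eq_mul, sub_zero]
      ring
    · have hfun : (fun t => F (θ, t)) = fun _ => (0 : ℝ) := by
        funext t
        exact Set.indicator_of_notMem (fun hmem => hθ hmem.1) _
      rw [hfun, MeasureTheory.integral_zero ℝ ℝ, Set.indicator_of_notMem hθ]
  have hIOC : IntegrableOn (fun θ => Real.cos (n * θ) * φ θ) (Set.Ioc a b) volume := by
    have h1 : IntegrableOn φ (Set.Icc a b) volume := hmono.integrableOn_isCompact isCompact_Icc
    have h2 : IntegrableOn φ (Set.Ioc a b) volume := h1.mono_set Set.Ioc_subset_Icc_self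
    exact h2.bdd_mul (c := 1) ((Real.continuous_cos.comp (continuous_const.mul continuous_id)).aestronglyMeasurable)
      (ae_of_all _ fun θ => by rw [Real.norm_eq_abs]; exact Real.abs_cos_le_one _)
  have hCOSint : IntegrableOn (fun θ => Real.cos (n * θ) * φ a) (Set.Ioc a b) volume := by
    apply Continuous.integrableOn_Ioc
    exact (Real.continuous_cos.comp (continuous_const.mul continuous_id)).mul continuous_const
  have hcos0 : (∫ θ in Set.Ioc a b, Real.cos (n * θ)) = 0 := by
    rw [← intervalIntegral.integral_of_le hab, cosInt (n : ℝ) hn0 a b,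
      sinEvenHalf n hn, sinEvenHalf' n hn]
    simp
  have hL : (∫ θ, ∫ t, F (θ, t)) = ∫ θ in a..b, Real.cos (n * θ) * φ θ := by
    rw [show (fun θ => ∫ t, F (θ, t)) =
        (Set.Ioc a b).indicator (fun θ => Real.cos (n * θ) * ψ θ) from funext hinner]
    rw [MeasureTheory.integral_indicator measurableSet_Ioc,
      intervalIntegral.integral_of_le hab]
    have hcongr : Set.EqOn (fun θ => Real.cos (n * θ) * ψ θ)
        (fun θ => Real.cos (n * θ) * φ θ - Real.cos (n * θ) * φ a) (Set.Ioc a b) := by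
      intro θ hθ
      simp only
      rw [hψeq θ (Set.Ioc_subset_Icc_self hθ)]
      ring
    rw [setIntegral_congr_fun measurableSet_Ioc hcongr, integral_sub hIOC hCOSint]
    have : (∫ θ in Set.Ioc a b, Real.cos (n * θ) * φ a) = 0 := by
      rw [MeasureTheory.integral_mul_const, hcos0, zero_mul]
    rw [this, sub_zero]
  -- RHS bound
  have hJbound : ∀ t, ‖∫ θ, F (θ, t)‖ ≤
      (Set.Ioc 0 (ψ b)).indicator (fun _ => 1 / (n : ℝ)) t := by
    intro t
    by_cases ht : t ∈ Set.Ioc 0 (ψ b)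
    swap
    · have hz : (fun θ => F (θ, t)) = fun _ => (0 : ℝ) := by
        funext θ
        exact Set.indicator_of_notMem
          (fun hmem => ht ⟨hmem.2.1, (hmem.2.2.trans_le (hψb_top θ)).le⟩) _
      rw [hz, MeasureTheory.integral_zero ℝ ℝ, Set.indicator_of_notMem ht, norm_zero]
    · rw [Set.indicator_of_mem ht]
      set T : Set ℝ := {θ : ℝ | t < ψ θ} with hTdef
      by_cases hTne : T.Nonempty
      swap
      · have hz : (fun θ => F (θ, t)) = fun _ => (0 : ℝ) := by
          funext θ
          exact Set.indicator_of_notMem (fun hmem => hTne ⟨θ, hmem.2.2⟩) _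
        rw [hz, MeasureTheory.integral_zero ℝ ℝ, norm_zero]
        positivity
      · have hTlb : ∀ u ∈ T, a < u := by
          intro u hu
          by_contra h
          push_neg at h
          have h2 : ψ u ≤ ψ a := hψmono h
          rw [hψa] at h2
          have : t < ψ u := hu
          linarith [ht.1]
        have hbdd : BddBelow T := ⟨a, fun u hu => (hTlb u hu).le⟩
        set c := sInf T with hcdef
        have hcb : c ≤ b := by
          obtain ⟨u, hu⟩ := hTne
          have hbT : b ∈ T := by
            have : t < ψ u := hu
            exact lt_of_lt_of_le this (hψb_top u)
          exact csInf_le hbdd hbT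
        have hac : a ≤ c := le_csInf hTne (fun u hu => (hTlb u hu).le)
        have hslice : ∀ θ, θ ≠ c →
            F (θ, t) = (Set.Ioc c b).indicator (fun θ => Real.cos (n * θ)) θ := by
          intro θ hθc
          by_cases hθ : θ ∈ Set.Ioc c b
          · have hθT : θ ∈ T := by
              obtain ⟨u, huT, hu⟩ := exists_lt_of_csInf_lt hTne hθ.1
              have : t < ψ u := huT
              exact lt_of_lt_of_le this (hψmono hu.le)
            rw [Set.indicator_of_mem hθ]
            exact Set.indicator_of_mem (show (θ, t) ∈ A from ⟨⟨lt_of_le_of_lt hac hθ.1, hθ.2⟩, ht.1, hθT⟩) _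
          · rw [Set.indicator_of_notMem hθ]
            refine Set.indicator_of_notMem (fun hmem => hθ ?_) _
            exact ⟨lt_of_le_of_ne (csInf_le hbdd hmem.2.2) (Ne.symm hθc), hmem.1.2⟩
        have hae : (fun θ => F (θ, t)) =ᵐ[volume]
            (Set.Ioc c b).indicator (fun θ => Real.cos (n * θ)) := by
          refine Filter.eventuallyEq_of_mem (compl_mem_ae_iff.mpr (measure_singleton c)) ?_
          intro θ hθ
          exact hslice θ hθ
        calc ‖∫ θ, F (θ, t)‖
            = ‖∫ θ in Set.Ioc c b, Real.cos (n * θ)‖ := by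
              rw [integral_congr_ae hae, MeasureTheory.integral_indicator measurableSet_Ioc]
          _ = ‖(Real.sin ((n : ℝ) * b) - Real.sin ((n : ℝ) * c)) / n‖ := by
              rw [← intervalIntegral.integral_of_le hcb, cosInt (n : ℝ) hn0 c b]
          _ ≤ 1 / n := by
              rw [hb, sinEvenHalf n hn, zero_sub, Real.norm_eq_abs, abs_div,
                abs_neg, abs_of_pos hnpos]
              gcongr
              exact Real.abs_sin_le_one _
  have hJint : Integrable (fun t => ∫ θ, F (θ, t)) volume := hFint.integral_prod_right
  have hGint : Integrable ((Set.Ioc 0 (ψ b)).indicator (fun _ => 1 / (n : ℝ))) volume := by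
    rw [integrable_indicator_iff measurableSet_Ioc]
    exact integrableOn_const measure_Ioc_lt_top.ne
  have hfinal : |∫ t, ∫ θ, F (θ, t)| ≤ ψ b / n := by
    calc |∫ t, ∫ θ, F (θ, t)|
        ≤ ∫ t, ‖∫ θ, F (θ, t)‖ := by
          rw [← Real.norm_eq_abs]
          exact norm_integral_le_integral_norm _
      _ ≤ ∫ t, (Set.Ioc 0 (ψ b)).indicator (fun _ => 1 / (n : ℝ)) t :=
          integral_mono hJint.norm hGint hJbound
      _ = ψ b / n := by
          rw [MeasureTheory.integral_indicator measurableSet_Ioc, setIntegral_const,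
            Real.volume_real_Ioc_of_le (by linarith [hψnonneg b])]
          simp only [smul_eq_mul, sub_zero]
          ring
  have hψbval : ψ b = φ b - φ a := hψeq b (Set.right_mem_Icc.mpr hab)
  rw [← hL, hswap] at *
  calc |∫ t, ∫ θ, F (θ, t)| ≤ ψ b / n := hfinal
    _ = (φ (π / 2) - φ (-(π / 2))) / n := by rw [hψbval]
/-- For even `n ≥ 2` and `φ` monotone and bounded on `[−π/2, π/2]`, there is
`ξ ∈ (−π/2, π/2)` with
`∫_{−π/2}^{π/2} cos(nθ) φ(θ) dθ = (sin(nξ)/n) (φ(−π/2) − φ(π/2))`. -/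
theorem second_mvt_cos_even (n : ℕ) (hn2 : 2 ≤ n) (hn : Even n) (φ : ℝ → ℝ)
    (hφ_mono : MonotoneOn φ (Set.Icc (-(π / 2)) (π / 2)) ∨
      AntitoneOn φ (Set.Icc (-(π / 2)) (π / 2)))
    (hφ_bdd : ∃ M : ℝ, ∀ θ ∈ Set.Icc (-(π / 2)) (π / 2), |φ θ| ≤ M) :
    ∃ ξ ∈ Set.Ioo (-(π / 2)) (π / 2),
      ∫ θ in (-(π / 2))..(π / 2), Real.cos (n * θ) * φ θ
        = (Real.sin (n * ξ) / n) * (φ (-(π / 2)) - φ (π / 2)) := by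
  have hπ : (0 : ℝ) < π := Real.pi_pos
  have hn0 : (n : ℝ) ≠ 0 := Nat.cast_ne_zero.mpr (by omega)
  have hnpos : (0 : ℝ) < n := by positivity
  set I := ∫ θ in (-(π / 2))..(π / 2), Real.cos (n * θ) * φ θ with hI
  set C : ℝ := φ (-(π / 2)) - φ (π / 2) with hC
  have hIbound : |I| ≤ |C| / n := by
    rcases hφ_mono with h | h
    · refine (keyBound n hn2 hn φ h).trans ?_
      gcongr
      rw [hC, abs_sub_comm]
      exact le_abs_self _
    · have hmono : MonotoneOn (fun θ => -φ θ) (Set.Icc (-(π / 2)) (π / 2)) :=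
        fun x hx y hy hxy => neg_le_neg (h hx hy hxy)
      have hkb := keyBound n hn2 hn (fun θ => -φ θ) hmono
      have hneg : (∫ θ in (-(π / 2))..(π / 2), Real.cos (n * θ) * (-φ θ)) = -I := by
        rw [hI, ← intervalIntegral.integral_neg]
        congr 1
        funext θ
        ring
      rw [hneg, abs_neg] at hkb
      refine hkb.trans ?_
      gcongr
      have hh : -φ (π / 2) - -φ (-(π / 2)) = C := by rw [hC]; ring
      rw [hh]
      exact le_abs_self _
  have hICn : |I| ≤ |C / n| := by
    rw [abs_div, abs_of_pos hnpos]
    exact hIbound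
  set g : ℝ → ℝ := fun ξ => Real.sin (n * ξ) / n * C with hg
  have hgc : ContinuousOn g (Set.uIcc (π / (2 * n)) (-(π / (2 * n)))) := by
    apply Continuous.continuousOn
    fun_prop
  have hx : (n : ℝ) * (π / (2 * n)) = π / 2 := by field_simp
  have hgx : g (π / (2 * n)) = C / n := by
    rw [hg]
    simp only
    rw [hx, Real.sin_pi_div_two]
    ring
  have hgy : g (-(π / (2 * n))) = -(C / n) := by
    rw [hg]
    simp only
    have : (n : ℝ) * (-(π / (2 * n))) = -(π / 2) := by rw [mul_neg, hx]
    rw [this, Real.sin_neg, Real.sin_pi_div_two]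
    ring
  have hmem : I ∈ Set.uIcc (g (π / (2 * n))) (g (-(π / (2 * n)))) := by
    rw [hgx, hgy, Set.mem_uIcc]
    have h1 := (abs_le.mp hICn).1
    have h2 := (abs_le.mp hICn).2
    rcases le_total (C / n) 0 with hc | hc
    · rw [abs_of_nonpos hc] at h1 h2
      exact Or.inl ⟨by linarith, by linarith⟩
    · rw [abs_of_nonneg hc] at h1 h2
      exact Or.inr ⟨by linarith, by linarith⟩
  obtain ⟨ξ, hξmem, hξI⟩ := intermediate_value_uIcc hgc hmem
  rw [Set.uIcc_of_ge (by linarith [show (0:ℝ) ≤ π / (2 * n) from by positivity] : -(π / (2 * n)) ≤ π / (2 * n))] at hξmem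
  have hquarter : π / (2 * n) ≤ π / 4 := by
    apply div_le_div_of_nonneg_left hπ.le (by norm_num)
    have : (2 : ℝ) ≤ n := by exact_mod_cast hn2
    linarith
  refine ⟨ξ, ⟨by nlinarith [hξmem.1], by nlinarith [hξmem.2]⟩, ?_⟩
  rw [← hξI, hg]
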